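/- arXiv:1112.4062 — 2 statements merged into one kernel-verified Lean document; each statement's English description precedes it below -/
import Mathlib

section
/- If R is a real closed field, then its value group under the natural valuation is divisible: for every value g and every nonzero n ∈ ℕ there exists h with h^n = g. -/
/-- A real closed field: every nonnegative element is a square and every odd degree
polynomial has a root. -/
def IsRealClosedF (R : Type*) [Field R] [LinearOrder R] [IsStrictOrderedRing R] : Prop :=
  (∀ x : R, 0 ≤ x → ∃ y : R, y ^ 2 = x) ∧
  (∀ p : Polynomial R, Odd p.natDegree → ∃ x : R, p.IsRoot x)

/-- Archimedean equivalence, i.e. equality of natural-valuation values. -/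
def ArchEquiv {R : Type*} [Field R] [LinearOrder R] [IsStrictOrderedRing R] (x y : R) : Prop :=
  ∃ n : ℕ, |y| ≤ (n : R) * |x| ∧ |x| ≤ (n : R) * |y|

lemma nthRoot_exists {R : Type*} [Field R] [LinearOrder R] [IsStrictOrderedRing R] (hRC : IsRealClosedF R) :
    ∀ n : ℕ, n ≠ 0 → ∀ x : R, 0 ≤ x → ∃ y : R, y ^ n = x := by
  intro n
  induction n using Nat.strong_induction_on with
  | _ n ih =>
    intro hn x hx
    rcases Nat.even_or_odd n with he | ho
    · obtain ⟨m, hm⟩ := he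
      have hm' : n = 2 * m := by omega
      have hmne : m ≠ 0 := by omega
      obtain ⟨s, hs⟩ := hRC.1 x hx
      have hs' : |s| ^ 2 = x := by rw [sq_abs]; exact hs
      obtain ⟨y, hy⟩ := ih m (by omega) hmne |s| (abs_nonneg s)
      exact ⟨y, by rw [hm', mul_comm 2 m, pow_mul, hy, hs']⟩
    · obtain ⟨r, hr⟩ := hRC.2 (Polynomial.X ^ n - Polynomial.C x)
        (by rwa [Polynomial.natDegree_X_pow_sub_C])
      refine ⟨r, ?_⟩
      have := hr
      simp [Polynomial.IsRoot, Polynomial.eval_sub, Polynomial.eval_pow,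
        sub_eq_zero] at this
      exact this

/-- The value group of a real closed field under the natural valuation is divisible:
for every value `v g` (`g ≠ 0`) and nonzero `n` there is `h` with `(v h)^n = v g`. -/
theorem stmt5 {R : Type*} [Field R] [LinearOrder R] [IsStrictOrderedRing R] (hRC : IsRealClosedF R) :
    ∀ g : R, g ≠ 0 → ∀ n : ℕ, n ≠ 0 → ∃ h : R, h ≠ 0 ∧ ArchEquiv (h ^ n) g := by
  intro g hg n hn
  obtain ⟨h, hh⟩ := nthRoot_exists hRC n hn |g| (abs_nonneg g)
  have hgabs : |g| ≠ 0 := abs_ne_zero.mpr hg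
  have hne : h ≠ 0 := by
    rintro rfl
    rw [zero_pow hn] at hh
    exact hgabs hh.symm
  have habs : |h ^ n| = |g| := by rw [hh, abs_abs]
  exact ⟨h, hne, 1, by simp [habs], by simp [habs]⟩
end

section
/- Let F be a truncation-closed subfield of k((G)), where k is an Archimedean ordered subfield of ℝ containing ℚ and G is an ordered abelian group. Let Z_F be the set of elements of the form t + z where t ∈ F ∩ k((G^{>1})) and z ∈ ℤ. Then Z_F is an integer part of F: it is a discretely ordered subring and for every s ∈ F there is w ∈ Z_F with w ≤ s < w + 1. -/
/- We model `k((G))` by `HahnSeries Γ K` where `Γ` is the order-reversed additive copy of the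
ordered abelian group `G`.  Under this correspondence `s.order` is the `G`-maximum of the
support, `G^{>1}` corresponds to `{γ : Γ | γ < 0}`, and the truncation `s_{<h}` (an initial
segment of the series, keeping the `G`-largest monomials) keeps the exponents `γ < c`. -/

/-- Truncation of a Hahn series: keep the part of the support below `c`
(the initial segment / leading part of the series). -/
noncomputable def trunc {Γ k : Type*} [AddCommGroup Γ] [LinearOrder Γ] [IsOrderedAddMonoid Γ]
    [Field k] [LinearOrder k] [IsStrictOrderedRing k]
    (s : HahnSeries Γ k) (c : Γ) : HahnSeries Γ k where
  coeff γ := if γ < c then s.coeff γ else 0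
  isPWO_support' := s.isPWO_support.mono (by
    intro γ hγ
    simp only [Function.mem_support] at hγ ⊢
    intro h
    apply hγ
    split_ifs <;> simp [h])

/-- Positivity in `k((G))`: the leading coefficient (at the `G`-maximum of the support,
i.e. at `s.order`) is positive. -/
def hpos {Γ k : Type*} [AddCommGroup Γ] [LinearOrder Γ] [IsOrderedAddMonoid Γ]
    [Field k] [LinearOrder k] [IsStrictOrderedRing k]
    (s : HahnSeries Γ k) : Prop :=
  0 < s.coeff s.order

/-- The order on `k((G))`. -/
def hlt {Γ k : Type*} [AddCommGroup Γ] [LinearOrder Γ] [IsOrderedAddMonoid Γ]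
    [Field k] [LinearOrder k] [IsStrictOrderedRing k]
    (s t : HahnSeries Γ k) : Prop :=
  hpos (t - s)

def hle {Γ k : Type*} [AddCommGroup Γ] [LinearOrder Γ] [IsOrderedAddMonoid Γ]
    [Field k] [LinearOrder k] [IsStrictOrderedRing k]
    (s t : HahnSeries Γ k) : Prop :=
  s = t ∨ hlt s t

/-- The truncation integer part `Z_F = (F ∩ k((G^{>1}))) + ℤ` of a truncation-closed
subfield `F`. -/
def ZF {Γ k : Type*} [AddCommGroup Γ] [LinearOrder Γ] [IsOrderedAddMonoid Γ]
    [Field k] [LinearOrder k] [IsStrictOrderedRing k]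
    (F : Set (HahnSeries Γ k)) : Set (HahnSeries Γ k) :=
  {w | ∃ t ∈ F, (∀ γ ∈ t.support, γ < 0) ∧ ∃ z : ℤ, w = t + (z : HahnSeries Γ k)}

set_option maxHeartbeats 1000000

section Aux

variable {Γ k : Type*} [AddCommGroup Γ] [LinearOrder Γ] [IsOrderedAddMonoid Γ]
    [Field k] [LinearOrder k] [IsStrictOrderedRing k]

theorem intCast_coeff' (z : ℤ) (γ : Γ) :
    (z : HahnSeries Γ k).coeff γ = if γ = 0 then (z : k) else 0 := by
  rw [show ((z : HahnSeries Γ k)) = HahnSeries.single 0 (z : k) by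
    rw [← HahnSeries.C_apply]; exact (map_intCast HahnSeries.C z).symm]
  split
  · subst ‹γ = 0›; exact HahnSeries.coeff_single_same _ _
  · exact HahnSeries.coeff_single_of_ne ‹_›

theorem order_eq_of' {x : HahnSeries Γ k} {c : Γ} (h1 : x.coeff c ≠ 0)
    (h2 : ∀ γ, γ < c → x.coeff γ = 0) : x.order = c := by
  have hx : x ≠ 0 := fun h => h1 (by simp [h])
  refine le_antisymm (HahnSeries.order_le_of_coeff_ne_zero h1) ?_
  by_contra h
  push_neg at h
  exact (mt HahnSeries.coeff_order_eq_zero.1 hx) (h2 _ h)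

theorem hpos_of' {x : HahnSeries Γ k} {c : Γ} (h1 : 0 < x.coeff c)
    (h2 : ∀ γ, γ < c → x.coeff γ = 0) : hpos x := by
  unfold hpos
  rw [order_eq_of' h1.ne' h2]
  exact h1

theorem hpos_elim' {x : HahnSeries Γ k} {c : Γ} (h1 : x.coeff c ≠ 0)
    (h2 : ∀ γ, γ < c → x.coeff γ = 0) (hx : hpos x) : 0 < x.coeff c := by
  unfold hpos at hx
  rwa [order_eq_of' h1 h2] at hx

end Aux

/-- Mourgues–Ressayre: for a truncation-closed subfield `F` of `k((G))`, with `k` an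
Archimedean ordered subfield of `ℝ`, the set `Z_F` is a discretely ordered subring of `F`
which is an integer part of `F`. -/
theorem stmt10 {Γ : Type*} [AddCommGroup Γ] [LinearOrder Γ] [IsOrderedAddMonoid Γ] (K : Subfield ℝ)
    (F : Subfield (HahnSeries Γ K))
    (hF : ∀ s ∈ F, ∀ c : Γ, trunc s c ∈ F) :
    (1 : HahnSeries Γ K) ∈ ZF (F : Set (HahnSeries Γ K)) ∧
    (∀ w ∈ ZF (F : Set (HahnSeries Γ K)), ∀ w' ∈ ZF (F : Set (HahnSeries Γ K)),
      w + w' ∈ ZF (F : Set (HahnSeries Γ K)) ∧ w * w' ∈ ZF (F : Set (HahnSeries Γ K)) ∧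
        -w ∈ ZF (F : Set (HahnSeries Γ K))) ∧
    (∀ w ∈ ZF (F : Set (HahnSeries Γ K)),
      ¬ ∃ w' ∈ ZF (F : Set (HahnSeries Γ K)), hlt w w' ∧ hlt w' (w + 1)) ∧
    (∀ s ∈ F, ∃ w ∈ ZF (F : Set (HahnSeries Γ K)), hle w s ∧ hlt s (w + 1)) := by
  -- generic support facts
  have supp_neg : ∀ {t : HahnSeries Γ K}, (∀ γ ∈ t.support, γ < 0) →
      ∀ γ : Γ, 0 ≤ γ → t.coeff γ = 0 := by
    intro t ht γ hγ
    by_contra h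
    exact absurd (ht γ h) (not_lt.2 hγ)
  refine ⟨⟨0, zero_mem F, by simp, 1, by simp⟩, ?_, ?_, ?_⟩
  · -- ring closure
    rintro w ⟨t, htF, ht, z, rfl⟩ w' ⟨t', htF', ht', z', rfl⟩
    refine ⟨⟨t + t', add_mem htF htF', ?_, z + z', by push_cast; ring⟩,
      ⟨t * t' + (z : HahnSeries Γ K) * t' + (z' : HahnSeries Γ K) * t,
        add_mem (add_mem (mul_mem htF htF') (mul_mem (intCast_mem F z) htF'))
          (mul_mem (intCast_mem F z') htF), ?_, z * z', by push_cast; ring⟩,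
      ⟨-t, neg_mem htF, ?_, -z, by push_cast; ring⟩⟩
    · intro γ hγ
      rcases HahnSeries.support_add_subset _ _ hγ with h | h
      · exact ht γ h
      · exact ht' γ h
    · intro γ hγ
      have hz : ∀ (m : ℤ) (tt : HahnSeries Γ K), (∀ γ ∈ tt.support, γ < 0) →
          γ ∈ ((m : HahnSeries Γ K) * tt).support → γ < 0 := by
        intro m tt htt hmem
        rcases HahnSeries.support_mul_subset hmem with ⟨γ1, h1, γ2, h2, rfl⟩
        have : γ1 = 0 := by
          by_contra h
          exact h1 (by rw [intCast_coeff']; simp [h])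
        subst this
        simpa using htt γ2 h2
      rcases HahnSeries.support_add_subset _ _ hγ with h | h
      · rcases HahnSeries.support_add_subset _ _ h with h | h
        · rcases HahnSeries.support_mul_subset h with ⟨γ1, h1, γ2, h2, rfl⟩
          show γ1 + γ2 < 0
          simpa using add_lt_add (ht γ1 h1) (ht' γ2 h2)
        · exact hz z t' ht' h
      · exact hz z' t ht h
    · intro γ hγ
      exact ht γ (by simpa using hγ)
  · -- discreteness
    rintro w ⟨t, htF, ht, z, rfl⟩ ⟨w', ⟨t', htF', ht', z', rfl⟩, h1, h2⟩
    set u : HahnSeries Γ K := t' - t with hu_def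
    have hu : ∀ γ : Γ, 0 ≤ γ → u.coeff γ = 0 := by
      intro γ hγ
      simp [hu_def, HahnSeries.coeff_sub, supp_neg ht γ hγ, supp_neg ht' γ hγ]
    have e1 : (t' + (z' : HahnSeries Γ K)) - (t + (z : HahnSeries Γ K)) =
        u + ((z' - z : ℤ) : HahnSeries Γ K) := by
      rw [hu_def]; push_cast; ring
    have e2 : (t + (z : HahnSeries Γ K) + 1) - (t' + (z' : HahnSeries Γ K)) =
        -u + ((1 - (z' - z) : ℤ) : HahnSeries Γ K) := by
      rw [hu_def]; push_cast; ring
    set m : ℤ := z' - z with hm_def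
    clear_value m
    rw [hlt, e1] at h1
    rw [hlt, e2] at h2
    by_cases hu0 : u = 0
    · by_cases hm0 : m = 0
      · rw [hu0, hm0] at h1
        simp only [Int.cast_zero, add_zero] at h1
        unfold hpos at h1
        simp at h1
      · have hcoeff : ∀ (b : ℤ), hpos ((b : HahnSeries Γ K)) → 0 < b := by
          intro b hp
          by_cases hb : b = 0
          · exfalso
            subst hb
            rw [Int.cast_zero] at hp
            unfold hpos at hp
            simp at hp
          have hb' : ((b : HahnSeries Γ K)).coeff 0 ≠ 0 := by
            rw [intCast_coeff']; simpa using hb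
          have := hpos_elim' hb' (fun γ hγ => by rw [intCast_coeff']; simp [hγ.ne]) hp
          rw [intCast_coeff'] at this
          simp only [if_pos rfl] at this
          exact_mod_cast (by exact_mod_cast (show (0:ℝ) < ((b:K):ℝ) from this) : (0:ℝ) < (b:ℝ))
        rw [hu0, zero_add] at h1
        rw [hu0, neg_zero, zero_add] at h2
        have hm1 : 0 < m := hcoeff m h1
        have hm2 : 0 < 1 - m := hcoeff (1 - m) h2
        omega
    · set c := u.order with hc_def
      have hcne : u.coeff c ≠ 0 := mt HahnSeries.coeff_order_eq_zero.1 hu0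
      have hcneg : c < 0 := by
        by_contra h
        exact hcne (hu c (not_lt.1 h))
      have hbelow : ∀ γ, γ < c → u.coeff γ = 0 := fun γ hγ =>
        HahnSeries.coeff_eq_zero_of_lt_order hγ
      have key : ∀ (b : ℤ) (v : HahnSeries Γ K), v = u ∨ v = -u →
          (v + (b : HahnSeries Γ K)).coeff c = v.coeff c ∧
          (∀ γ, γ < c → (v + (b : HahnSeries Γ K)).coeff γ = 0) := by
        intro b v hv
        have hvb : ∀ γ, γ < c → v.coeff γ = 0 := by
          intro γ hγ
          rcases hv with rfl | rfl
          · exact hbelow γ hγ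
          · simp [hbelow γ hγ]
        constructor
        · simp [HahnSeries.coeff_add, intCast_coeff', hcneg.ne]
        · intro γ hγ
          simp [HahnSeries.coeff_add, intCast_coeff', hvb γ hγ, (hγ.trans hcneg).ne]
      obtain ⟨k1, k2⟩ := key m u (Or.inl rfl)
      obtain ⟨k1', k2'⟩ := key (1 - m) (-u) (Or.inr rfl)
      have p1 := hpos_elim' (c := c) (by rw [k1]; exact hcne) k2 h1
      have p2 := hpos_elim' (c := c) (by rw [k1']; simpa using hcne) k2' h2
      rw [k1] at p1
      rw [k1'] at p2
      simp only [HahnSeries.coeff_neg] at p2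
      linarith
  · -- integer part
    intro s hs
    set t : HahnSeries Γ K := trunc s 0 with ht_def
    have htF : t ∈ F := hF s hs 0
    have htsupp : ∀ γ ∈ t.support, γ < 0 := by
      intro γ hγ
      by_contra h
      apply hγ
      show (if γ < 0 then s.coeff γ else 0) = 0
      simp [h]
    set a : K := s.coeff 0 with ha_def
    set n : ℤ := ⌊(a : ℝ)⌋ with hn_def
    set ε : HahnSeries Γ K := s - (t + (n : HahnSeries Γ K)) with hε_def
    have hεc : ∀ γ : Γ, γ < 0 → ε.coeff γ = 0 := by
      intro γ hγ
      rw [hε_def]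
      simp only [HahnSeries.coeff_sub, HahnSeries.coeff_add, intCast_coeff', if_neg hγ.ne]
      show s.coeff γ - ((if γ < 0 then s.coeff γ else 0) + 0) = 0
      simp [hγ]
    have hε0 : ε.coeff 0 = a - (n : K) := by
      rw [hε_def]
      simp only [HahnSeries.coeff_sub, HahnSeries.coeff_add, intCast_coeff', if_pos rfl]
      show s.coeff 0 - ((if (0:Γ) < 0 then s.coeff 0 else 0) + (n : K)) = a - (n : K)
      rw [if_neg (lt_irrefl (0:Γ)), ha_def]
      ring
    -- translate: s - (t + z) = ε + (n - z)
    have hsw : ∀ z : ℤ, s - (t + (z : HahnSeries Γ K)) =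
        ε + ((n - z : ℤ) : HahnSeries Γ K) := by
      intro z
      rw [hε_def]; push_cast; ring
    have hsw' : ∀ z : ℤ, (t + (z : HahnSeries Γ K) + 1) - s =
        -ε + ((z + 1 - n : ℤ) : HahnSeries Γ K) := by
      intro z
      rw [hε_def]; push_cast; ring
    have hcoeff0 : ∀ z : ℤ, (s - (t + (z : HahnSeries Γ K))).coeff 0 = a - (z : K) := by
      intro z
      rw [hsw z]
      simp only [HahnSeries.coeff_add, intCast_coeff', if_pos rfl, hε0]
      push_cast; ring
    have hcoeff0' : ∀ z : ℤ,
        ((t + (z : HahnSeries Γ K) + 1) - s).coeff 0 = (z : K) + 1 - a := by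
      intro z
      rw [hsw' z]
      simp only [HahnSeries.coeff_add, HahnSeries.coeff_neg, intCast_coeff', if_pos rfl, hε0]
      push_cast; ring
    have hcoeffneg : ∀ (z : ℤ) (γ : Γ), γ < 0 →
        (s - (t + (z : HahnSeries Γ K))).coeff γ = 0 := by
      intro z γ hγ
      rw [hsw z]
      simp [HahnSeries.coeff_add, intCast_coeff', hεc γ hγ, hγ.ne]
    have hcoeffneg' : ∀ (z : ℤ) (γ : Γ), γ < 0 →
        ((t + (z : HahnSeries Γ K) + 1) - s).coeff γ = 0 := by
      intro z γ hγ
      rw [hsw' z]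
      simp [HahnSeries.coeff_add, HahnSeries.coeff_neg, intCast_coeff', hεc γ hγ, hγ.ne]
    clear_value t a n ε
    -- K-order facts
    have kcast : ∀ z : ℤ, (((z : K)) : ℝ) = (z : ℝ) := by intro z; push_cast; ring
    have klt : ∀ x y : K, (x : ℝ) < (y : ℝ) → x < y := fun x y h => h
    by_cases hfrac : (n : ℝ) < (a : ℝ)
    · -- fractional part positive: z = n works
      refine ⟨t + (n : HahnSeries Γ K), ⟨t, htF, htsupp, n, rfl⟩, Or.inr ?_, ?_⟩
      · refine hpos_of' (c := 0) ?_ (fun γ hγ => hcoeffneg n γ hγ)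
        rw [hcoeff0 n]
        show ((0:K):ℝ) < ((a - (n:K)):ℝ)
        push_cast
        linarith
      · refine hpos_of' (c := 0) ?_ (fun γ hγ => hcoeffneg' n γ hγ)
        rw [hcoeff0' n]
        have hfl := Int.lt_floor_add_one (a : ℝ)
        rw [← hn_def] at hfl
        show ((0:K):ℝ) < (((n:K) + 1 - a):ℝ)
        push_cast
        linarith
    · -- a = n
      have han : a = (n : K) := by
        have h1 : (n : ℝ) ≤ (a : ℝ) := by rw [hn_def]; exact Int.floor_le _
        have h2 : (a : ℝ) ≤ (n : ℝ) := not_lt.1 hfrac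
        apply Subtype.coe_injective
        show (a:ℝ) = ((n:K):ℝ)
        push_cast
        linarith
      have hε0' : ε.coeff 0 = 0 := by rw [hε0, han]; ring
      have hεle : ∀ γ : Γ, γ ≤ 0 → ε.coeff γ = 0 := by
        intro γ hγ
        rcases lt_or_eq_of_le hγ with h | h
        · exact hεc γ h
        · rw [h]; exact hε0'
      by_cases hεz : ε = 0
      · -- s = t + n exactly
        refine ⟨t + (n : HahnSeries Γ K), ⟨t, htF, htsupp, n, rfl⟩, Or.inl ?_, ?_⟩
        · have h0 : s - (t + (n : HahnSeries Γ K)) = 0 := by rw [← hε_def]; exact hεz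
          exact (sub_eq_zero.1 h0).symm
        · refine hpos_of' (c := 0) ?_ (fun γ hγ => hcoeffneg' n γ hγ)
          rw [hcoeff0' n, han]
          have e : (n:K) + 1 - (n:K) = 1 := by ring
          rw [e]
          exact one_pos
      · set c := ε.order with hc_def
        have hcne : ε.coeff c ≠ 0 := mt HahnSeries.coeff_order_eq_zero.1 hεz
        have hcpos : 0 < c := by
          by_contra h
          exact hcne (hεle c (not_lt.1 h))
        have hbelow : ∀ γ, γ < c → ε.coeff γ = 0 := fun γ hγ =>
          HahnSeries.coeff_eq_zero_of_lt_order hγ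
        rcases lt_or_gt_of_ne hcne with hneg | hposc
        · -- leading coeff of ε negative: take z = n - 1
          refine ⟨t + ((n - 1 : ℤ) : HahnSeries Γ K), ⟨t, htF, htsupp, n - 1, rfl⟩,
            Or.inr ?_, ?_⟩
          · refine hpos_of' (c := 0) ?_ (fun γ hγ => hcoeffneg (n-1) γ hγ)
            rw [hcoeff0 (n-1), han]
            have e : (n:K) - ((n-1 : ℤ):K) = 1 := by push_cast; ring
            rw [e]
            exact one_pos
          · -- (w+1) - s = -ε
            have e : (t + ((n - 1 : ℤ) : HahnSeries Γ K) + 1) - s = -ε := by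
              rw [hε_def]; push_cast; ring
            rw [hlt, e]
            refine hpos_of' (c := c) (by simpa using hneg) ?_
            intro γ hγ
            simp [hbelow γ hγ]
        · -- leading coeff of ε positive: take z = n
          refine ⟨t + (n : HahnSeries Γ K), ⟨t, htF, htsupp, n, rfl⟩, Or.inr ?_, ?_⟩
          · have e : s - (t + (n : HahnSeries Γ K)) = ε := by rw [hε_def]
            rw [hlt, e]
            exact hpos_of' (c := c) hposc hbelow
          · refine hpos_of' (c := 0) ?_ (fun γ hγ => hcoeffneg' n γ hγ)
            rw [hcoeff0' n, han]
            have e : (n:K) + 1 - (n:K) = 1 := by ring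
            rw [e]
            exact one_pos
end
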